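/- The spectral radius of the 4×4 matrix [[1,1,0,0],[1,1,1,0],[0,1,0,1],[0,0,1,0]] equals (1+√13)/2. -/

import Mathlib

/-- The spectral radius of a square complex matrix. -/
noncomputable def specRad {m : Type*} [Fintype m] [DecidableEq m]
    (M : Matrix m m ℂ) : ℝ :=
  sSup {r : ℝ | ∃ μ ∈ spectrum ℂ M, r = ‖μ‖}

private lemma spec_iff (μ : ℂ) :
    μ ∈ spectrum ℂ (!![1, 1, 0, 0; 1, 1, 1, 0; 0, 1, 0, 1; 0, 0, 1, 0] :
        Matrix (Fin 4) (Fin 4) ℂ) ↔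
      μ * (μ - 1) * (μ ^ 2 - μ - 3) = 0 := by
  rw [spectrum.mem_iff, Matrix.isUnit_iff_isUnit_det, isUnit_iff_ne_zero, not_not]
  have h : (algebraMap ℂ (Matrix (Fin 4) (Fin 4) ℂ)) μ -
      !![1, 1, 0, 0; 1, 1, 1, 0; 0, 1, 0, 1; 0, 0, 1, 0] =
      !![μ - 1, -1, 0, 0; -1, μ - 1, -1, 0; 0, -1, μ, -1; 0, 0, -1, μ] := by
    ext i j
    fin_cases i <;> fin_cases j <;>
      simp [Matrix.algebraMap_matrix_apply, Matrix.vecHead, Matrix.vecTail]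
  have hdet : (!![μ - 1, -1, 0, 0; -1, μ - 1, -1, 0; 0, -1, μ, -1; 0, 0, -1, μ] :
      Matrix (Fin 4) (Fin 4) ℂ).det = μ * (μ - 1) * (μ ^ 2 - μ - 3) := by
    simp [Matrix.det_succ_row_zero, Fin.sum_univ_succ, Fin.succAbove]
    ring
  rw [h, hdet]

/-- The spectral radius of the `4 × 4` matrix
`[[1,1,0,0],[1,1,1,0],[0,1,0,1],[0,0,1,0]]` equals `(1 + √13)/2`. -/
theorem stmt_9 :
    specRad (!![1, 1, 0, 0; 1, 1, 1, 0; 0, 1, 0, 1; 0, 0, 1, 0] :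
        Matrix (Fin 4) (Fin 4) ℂ) = (1 + Real.sqrt 13) / 2 := by
  have hs : Real.sqrt 13 ^ 2 = 13 := Real.sq_sqrt (by norm_num)
  have hs0 : (0:ℝ) ≤ Real.sqrt 13 := Real.sqrt_nonneg 13
  have hs1 : (1:ℝ) ≤ Real.sqrt 13 := by nlinarith
  have hsC : ((Real.sqrt 13 : ℝ) : ℂ) ^ 2 = 13 := by exact_mod_cast hs
  set c : ℝ := (1 + Real.sqrt 13) / 2 with hc
  have hc0 : (0:ℝ) ≤ c := by positivity
  -- every element of the set is ≤ c
  have hub : ∀ r ∈ {r : ℝ | ∃ μ ∈ spectrum ℂ (!![1, 1, 0, 0; 1, 1, 1, 0; 0, 1, 0, 1;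
      0, 0, 1, 0] : Matrix (Fin 4) (Fin 4) ℂ), r = ‖μ‖}, r ≤ c := by
    rintro r ⟨μ, hμ, rfl⟩
    rw [spec_iff] at hμ
    rcases mul_eq_zero.1 hμ with h | h
    · rcases mul_eq_zero.1 h with h | h
      · subst h; simp [hc]; linarith
      · have : μ = 1 := by linear_combination h
        subst this; simp [hc]; linarith
    · have hfac : (μ - ((1 + (Real.sqrt 13 : ℝ)) / 2 : ℂ)) *
          (μ - ((1 - (Real.sqrt 13 : ℝ)) / 2 : ℂ)) = 0 := by
        linear_combination h - hsC / 4
      rcases mul_eq_zero.1 hfac with h' | h'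
      · have : μ = ((1 + (Real.sqrt 13 : ℝ)) / 2 : ℂ) := by linear_combination h'
        subst this
        have : ((1 + (Real.sqrt 13 : ℝ)) / 2 : ℂ) = ((c : ℝ) : ℂ) := by push_cast [hc]; ring
        rw [this, Complex.norm_real, Real.norm_eq_abs, abs_of_nonneg hc0]
      · have : μ = ((1 - (Real.sqrt 13 : ℝ)) / 2 : ℂ) := by linear_combination h'
        subst this
        have h2 : ((1 - (Real.sqrt 13 : ℝ)) / 2 : ℂ) =
            (((1 - Real.sqrt 13) / 2 : ℝ) : ℂ) := by push_cast; ring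
        rw [h2, Complex.norm_real, Real.norm_eq_abs]
        rw [abs_of_nonpos (by linarith)]
        rw [hc]; linarith
  unfold specRad
  apply le_antisymm
  · exact csSup_le ⟨0, 0, (spec_iff 0).2 (by ring), by simp⟩ hub
  · apply le_csSup ⟨c, hub⟩
    refine ⟨((c : ℝ) : ℂ), (spec_iff _).2 ?_, by
      rw [Complex.norm_real, Real.norm_eq_abs, abs_of_nonneg hc0]⟩
    have hroot : ((c : ℝ) : ℂ) ^ 2 - ((c : ℝ) : ℂ) - 3 = 0 := by
      push_cast [hc]
      linear_combination hsC / 4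
    rw [mul_eq_zero]
    exact Or.inr hroot
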